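/- Let X be an ordered Banach space with normal cone X₊ (order intervals are norm bounded) such that X₊ has non-empty interior. Then X is reflexive if and only if every order interval [x, y] in X is weakly compact. -/

import Mathlib

open NormedSpace

theorem exists_eval_of_weakDual_clm {E : Type*} [NormedAddCommGroup E] [NormedSpace ℝ E]
    (f : WeakDual ℝ E →L[ℝ] ℝ) : ∃ g : E, ∀ F : WeakDual ℝ E, f F = F g := by
  classical
  have hp := (topDualPairing ℝ E).weakBilin_withSeminorms
  set p := (topDualPairing ℝ E).toSeminormFamily with hpdef
  let q : Seminorm ℝ (WeakDual ℝ E) := (normSeminorm ℝ ℝ).comp (f : WeakDual ℝ E →ₗ[ℝ] ℝ)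
  have hqc : Continuous q := by
    have : (⇑q : WeakDual ℝ E → ℝ) = fun F => ‖f F‖ := rfl
    rw [this]; exact f.continuous.norm
  obtain ⟨s, Cn, hC0, hle⟩ := Seminorm.bound_of_continuous hp q hqc
  have hker : ∀ F : WeakDual ℝ E, (∀ g ∈ s, F g = 0) → f F = 0 := by
    intro F hF
    have h0 : (s.sup p) F ≤ 0 := by
      refine Seminorm.finset_sup_apply_le le_rfl fun i hi => ?_
      have : p i F = ‖F i‖ := rfl
      rw [this, hF i hi, norm_zero]
    have h1 : (s.sup p) F = 0 := le_antisymm h0 (apply_nonneg _ _)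
    have h2 : ‖f F‖ ≤ (Cn • s.sup p) F := hle F
    replace h2 : ‖f F‖ ≤ Cn • (s.sup p) F := h2
    rw [h1] at h2
    have : ‖f F‖ ≤ 0 := by simpa using h2
    exact norm_le_zero_iff.mp this
  let L : s → (WeakDual ℝ E →ₗ[ℝ] ℝ) := fun i => (topDualPairing ℝ E).flip (i : E)
  have hk : ⨅ i, LinearMap.ker (L i) ≤ LinearMap.ker (f : WeakDual ℝ E →ₗ[ℝ] ℝ) := by
    intro F hF
    simp only [Submodule.mem_iInf, LinearMap.mem_ker] at hF ⊢
    exact hker F fun g hg => hF ⟨g, hg⟩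
  have hsp := mem_span_of_iInf_ker_le_ker hk
  obtain ⟨c, hc⟩ := (Submodule.mem_span_range_iff_exists_fun ℝ).1 hsp
  refine ⟨∑ i : s, c i • (i : E), fun F => ?_⟩
  have h1 : f F = ∑ i : s, c i • F (i : E) := by
    have := LinearMap.congr_fun hc F
    simp only [LinearMap.coe_sum, Finset.sum_apply, LinearMap.smul_apply,
      ContinuousLinearMap.coe_coe] at this
    rw [← this]
    rfl
  rw [h1, map_sum]
  simp

open Metric Set Bornology

set_option maxHeartbeats 1000000 in
theorem reflexive_iff_weakly_compact_order_intervals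
    {X : Type*} [NormedAddCommGroup X] [NormedSpace ℝ X] [CompleteSpace X]
    (C : Set X) (hclosed : IsClosed C)
    (hadd : ∀ x ∈ C, ∀ y ∈ C, x + y ∈ C)
    (hsmul : ∀ (α : ℝ), 0 ≤ α → ∀ x ∈ C, α • x ∈ C)
    (hconvex : Convex ℝ C)
    (hproper : C ∩ (-C) = {0})
    (hnormal : ∀ x y : X, ∃ M : ℝ, ∀ z : X, z - x ∈ C → y - z ∈ C → ‖z‖ ≤ M)
    (hint : (interior C).Nonempty) :
    Function.Surjective (NormedSpace.inclusionInDoubleDual ℝ X) ↔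
      ∀ x y : X, IsCompact (toWeakSpace ℝ X '' {z : X | z - x ∈ C ∧ y - z ∈ C}) := by
  classical
  set J := NormedSpace.inclusionInDoubleDual ℝ X with hJdef
  -- the canonical linear map into the weak-star double dual
  let ψ : X →ₗ[ℝ] WeakDual ℝ (StrongDual ℝ X) :=
    { toFun := fun z => StrongDual.toWeakDual (J z)
      map_add' := fun a b => by simp
      map_smul' := fun a b => by simp }
  have hψapp : ∀ (z : X) (g : StrongDual ℝ X), ψ z g = g z := fun z g => rfl
  have hJnorm : ∀ z : X, ‖J z‖ = ‖z‖ := fun z =>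
    (NormedSpace.inclusionInDoubleDualLi ℝ (E := X)).norm_map z
  have hψw : Continuous fun z : WeakSpace ℝ X => ψ ((toWeakSpace ℝ X).symm z) := by
    apply WeakBilin.continuous_of_continuous_eval
    intro g
    exact WeakBilin.eval_continuous ((topDualPairing ℝ X).flip) g
  -- weakly closed convex sets
  have hwc : ∀ s : Set X, Convex ℝ s → IsClosed s → IsClosed (toWeakSpace ℝ X '' s) := by
    intro s hconv hcl
    have h := hconv.toWeakSpace_closure (𝕜 := ℝ)
    rw [hcl.closure_eq] at h
    rw [h]
    exact isClosed_closure
  -- interval convexity/closedness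
  have hKconv : ∀ x y : X, Convex ℝ {z : X | z - x ∈ C ∧ y - z ∈ C} := by
    intro x y z1 h1 z2 h2 a b ha hb hab
    constructor
    · have e1 : a • (z1 - x) + b • (z2 - x) = a • z1 + b • z2 - x := by
        rw [smul_sub, smul_sub,
          show a • z1 - a • x + (b • z2 - b • x) = a • z1 + b • z2 - (a • x + b • x) by abel,
          ← add_smul, hab, one_smul]
      exact e1 ▸ hconvex h1.1 h2.1 ha hb hab
    · have e2 : a • (y - z1) + b • (y - z2) = y - (a • z1 + b • z2) := by
        rw [smul_sub, smul_sub,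
          show a • y - a • z1 + (b • y - b • z2) = a • y + b • y - (a • z1 + b • z2) by abel,
          ← add_smul, hab, one_smul]
      exact e2 ▸ hconvex h1.2 h2.2 ha hb hab
  have hKcl : ∀ x y : X, IsClosed {z : X | z - x ∈ C ∧ y - z ∈ C} := by
    intro x y
    exact (hclosed.preimage (continuous_id.sub continuous_const)).inter
      (hclosed.preimage (continuous_const.sub continuous_id))
  constructor
  · -- reflexive ⇒ intervals weakly compact
    intro hsurj x y
    set K := {z : X | z - x ∈ C ∧ y - z ∈ C} with hKdef
    obtain ⟨M, hM⟩ := hnormal x y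
    have hinj : Function.Injective J := fun a b h =>
      (NormedSpace.inclusionInDoubleDualLi ℝ (E := X)).injective h
    let e : X ≃ₗ[ℝ] StrongDual ℝ (StrongDual ℝ X) :=
      LinearEquiv.ofBijective (J : X →ₗ[ℝ] StrongDual ℝ (StrongDual ℝ X))
        ⟨hinj, hsurj⟩
    let χ : WeakDual ℝ (StrongDual ℝ X) → WeakSpace ℝ X := fun F =>
      toWeakSpace ℝ X (e.symm (StrongDual.toWeakDual.symm F))
    have hkey : ∀ (F : WeakDual ℝ (StrongDual ℝ X)) (g : StrongDual ℝ X),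
        g (e.symm (StrongDual.toWeakDual.symm F)) = F g := by
      intro F g
      have h1 : (J : X →ₗ[ℝ] StrongDual ℝ (StrongDual ℝ X))
          (e.symm (StrongDual.toWeakDual.symm F)) =
          StrongDual.toWeakDual.symm F := e.apply_symm_apply _
      exact congrArg (fun h : StrongDual ℝ (StrongDual ℝ X) => h g) h1
    have hχ : Continuous χ := by
      apply WeakBilin.continuous_of_continuous_eval
      intro g
      have heq : (fun F : WeakDual ℝ (StrongDual ℝ X) =>
          (topDualPairing ℝ X).flip (χ F) g) = fun F : WeakDual ℝ (StrongDual ℝ X) =>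
          (topDualPairing ℝ (StrongDual ℝ X)) F g := funext fun F => hkey F g
      rw [heq]
      exact WeakBilin.eval_continuous _ g
    have hχψ : ∀ z : X, χ (ψ z) = toWeakSpace ℝ X z := by
      intro z
      have : e.symm (StrongDual.toWeakDual.symm (ψ z)) = z := e.symm_apply_apply z
      exact congrArg (toWeakSpace ℝ X) this
    set S : Set (WeakDual ℝ (StrongDual ℝ X)) := ψ '' K with hSdef
    have hSeq : S = χ ⁻¹' (toWeakSpace ℝ X '' K) := by
      ext F
      constructor
      · rintro ⟨z, hz, rfl⟩
        exact ⟨z, hz, (hχψ z).symm⟩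
      · rintro ⟨z, hz, hzF⟩
        have hFz : F = ψ z := by
          have h2 : χ (ψ z) = χ F := by rw [hχψ z, hzF]
          have h3 : e.symm (StrongDual.toWeakDual.symm (ψ z)) =
              e.symm (StrongDual.toWeakDual.symm F) :=
            (toWeakSpace ℝ X).injective h2
          have h4 := congrArg (fun w => StrongDual.toWeakDual (e w)) h3
          simpa using h4.symm
        exact ⟨z, hz, hFz.symm⟩
    have hSb : IsBounded (StrongDual.toWeakDual ⁻¹' S) := by
      refine (isBounded_iff_forall_norm_le).2 ⟨M, ?_⟩
      intro G hG
      obtain ⟨z, hz, hzG⟩ := hG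
      have hGz : G = J z := by
        have h5 := congrArg (StrongDual.toWeakDual.symm) hzG
        exact h5.symm
      rw [hGz, hJnorm]
      exact hM z hz.1 hz.2
    have hScl : IsClosed S := by
      rw [hSeq]
      exact (hwc K (hKconv x y) (hKcl x y)).preimage hχ
    have hScomp : IsCompact S := WeakDual.isCompact_of_bounded_of_closed hSb hScl
    have himg : toWeakSpace ℝ X '' K = χ '' S := by
      rw [hSdef, image_image]
      exact (image_congr fun z _ => (hχψ z).symm)
    rw [himg]
    exact hScomp.image hχ
  · -- intervals weakly compact ⇒ reflexive
    intro hcomp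
    obtain ⟨u, hu⟩ := hint
    obtain ⟨r, hr0, hball⟩ := Metric.isOpen_iff.1 isOpen_interior u hu
    have hballC : ball u r ⊆ C := hball.trans interior_subset
    set ρ := r / 2 with hρdef
    have hρ0 : 0 < ρ := by positivity
    have hρr : ρ < r := by rw [hρdef]; linarith
    have hBK : closedBall u ρ ⊆ {z : X | z - 0 ∈ C ∧ (u + u) - z ∈ C} := by
      intro z hz
      have hz' : ‖z - u‖ ≤ ρ := by rwa [mem_closedBall, dist_eq_norm] at hz
      constructor
      · have hzb : z ∈ ball u r := by
          rw [mem_ball, dist_eq_norm]; linarith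
        simpa using hballC hzb
      · have h5 : u + (u - z) ∈ ball u r := by
          rw [mem_ball, dist_eq_norm, add_sub_cancel_left, norm_sub_rev]
          linarith
        have h2 : u + u - z = u + (u - z) := by abel
        show u + u - z ∈ C
        rw [h2]
        exact hballC h5
    have hBcl : IsClosed (toWeakSpace ℝ X '' closedBall u ρ) :=
      hwc _ (convex_closedBall u ρ) Metric.isClosed_closedBall
    have hBcomp : IsCompact (toWeakSpace ℝ X '' closedBall u ρ) :=
      (hcomp 0 (u + u)).of_isClosed_subset hBcl (image_mono hBK)
    set S : Set (WeakDual ℝ (StrongDual ℝ X)) := ψ '' closedBall u ρ with hSdef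
    have hScomp : IsCompact S := by
      have h6 : S = (fun z : WeakSpace ℝ X => ψ ((toWeakSpace ℝ X).symm z)) ''
          (toWeakSpace ℝ X '' closedBall u ρ) := by
        rw [image_image]
        simp
        rfl
      rw [h6]
      exact hBcomp.image hψw
    have hSconv : Convex ℝ S := (convex_closedBall u ρ).linear_image ψ
    have hScl : IsClosed S := hScomp.isClosed
    haveI : LocallyConvexSpace ℝ (WeakDual ℝ (StrongDual ℝ X)) :=
      WeakBilin.locallyConvexSpace (E := StrongDual ℝ (StrongDual ℝ X)) (F := StrongDual ℝ X) (𝕜 := ℝ)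
    have hcover : ∀ G : StrongDual ℝ (StrongDual ℝ X), ‖G - J u‖ ≤ ρ →
        StrongDual.toWeakDual G ∈ S := by
      intro G hG
      by_contra hGS
      obtain ⟨f, t, hfS, htG⟩ := geometric_hahn_banach_closed_point hSconv hScl hGS
      obtain ⟨g, hg⟩ := exists_eval_of_weakDual_clm f
      have h1 : ∀ z ∈ closedBall u ρ, g z < t := by
        intro z hz
        have h7 := hfS _ ⟨z, hz, rfl⟩
        rwa [hg] at h7
      have htu : g u < t := h1 u (mem_closedBall_self hρ0.le)
      have key : ∀ v : X, ‖v‖ ≤ ρ → g v ≤ t - g u := by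
        intro v hv
        have hm : u + v ∈ closedBall u ρ := by
          rw [mem_closedBall, dist_eq_norm, add_sub_cancel_left]; exact hv
        have h8 := h1 _ hm
        rw [map_add] at h8; linarith
      have h2 : ‖g‖ ≤ (t - g u) / ρ := by
        apply g.opNorm_le_bound (div_nonneg (by linarith) hρ0.le)
        intro w
        rcases eq_or_ne w 0 with rfl | hw
        · simp
        · have hwn : 0 < ‖w‖ := norm_pos_iff.2 hw
          have hcoef : ‖(ρ / ‖w‖) • w‖ ≤ ρ := by
            rw [norm_smul, Real.norm_eq_abs, abs_of_pos (by positivity),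
              div_mul_cancel₀ _ hwn.ne']
          have k1 := key _ hcoef
          have k2 := key (-((ρ / ‖w‖) • w)) (by rwa [norm_neg])
          rw [map_smul, smul_eq_mul] at k1
          rw [map_neg, map_smul, smul_eq_mul] at k2
          have habs : (ρ / ‖w‖) * |g w| ≤ t - g u := by
            rcases abs_cases (g w) with ⟨h, _⟩ | ⟨h, _⟩
            · rw [h]; exact k1
            · rw [h]; nlinarith
          rw [Real.norm_eq_abs]
          calc |g w| = ((ρ / ‖w‖) * |g w|) * (‖w‖ / ρ) := by field_simp
          _ ≤ (t - g u) * (‖w‖ / ρ) := by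
              exact mul_le_mul_of_nonneg_right habs (by positivity)
          _ = (t - g u) / ρ * ‖w‖ := by ring
      have h3 : f (StrongDual.toWeakDual G) ≤ t := by
        rw [hg]
        have e1 : (StrongDual.toWeakDual G) g = g u + (G - J u) g := by
          have h7 : (G - J u) g = G g - (J u) g := rfl
          have h8 : (J u) g = g u := rfl
          have h9 : (StrongDual.toWeakDual G) g = G g := rfl
          rw [h9, h7, h8]; ring
        have e2 : (G - J u) g ≤ ρ * ‖g‖ := by
          calc (G - J u) g ≤ ‖(G - J u) g‖ := by
                rw [Real.norm_eq_abs]; exact le_abs_self _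
          _ ≤ ‖G - J u‖ * ‖g‖ := (G - J u).le_opNorm g
          _ ≤ ρ * ‖g‖ := mul_le_mul_of_nonneg_right hG (norm_nonneg _)
        have e3 : ρ * ‖g‖ ≤ t - g u := by
          have h9 := mul_le_mul_of_nonneg_left h2 hρ0.le
          rwa [mul_div_cancel₀ _ hρ0.ne'] at h9
        rw [e1]; linarith
      exact absurd htG (not_lt.2 h3)
    intro F
    rcases eq_or_lt_of_le (norm_nonneg (F - J u)) with h0 | hpos
    · refine ⟨u, ?_⟩
      have hFu : F - J u = 0 := (norm_eq_zero (E := StrongDual ℝ (StrongDual ℝ X))).mp h0.symm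
      exact (sub_eq_zero.mp hFu).symm
    · set α := ‖F - J u‖ with hα
      set G := J u + (ρ / α) • (F - J u) with hG
      have hGnorm : ‖G - J u‖ ≤ ρ := by
        rw [hG, add_sub_cancel_left]
        refine (ContinuousLinearMap.opNorm_smul_le _ _).trans ?_
        rw [Real.norm_eq_abs,
          abs_of_pos (by positivity), ← hα, div_mul_cancel₀ _ hpos.ne']
      obtain ⟨z, hz, hzG⟩ := hcover G hGnorm
      have hJz : J z = G := by
        have h5 := congrArg (StrongDual.toWeakDual.symm) hzG
        exact h5
      refine ⟨u + (α / ρ) • (z - u), ?_⟩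
      have h10 : J (u + (α / ρ) • (z - u)) = J u + (α / ρ) • (J z - J u) := by
        rw [map_add, map_smul, map_sub]
      rw [h10, hJz, hG, add_sub_cancel_left, smul_smul,
        show α / ρ * (ρ / α) = 1 by field_simp, one_smul, add_sub_cancel]
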